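/- arXiv:1908.03110 — 3 statements merged into one kernel-verified Lean document; each statement's English description precedes it below -/
import Mathlib

section
/- For all ρ ≥ 0 and u ∈ ℝ, the first moment of the Maxwellian satisfies ∫_ℝ ξ M(ρ,u,ξ) dξ = (ρu, ρu² + κ ρ^γ), i.e., it equals the flux F(ρ,u) of the isentropic gas equations. -/
open MeasureTheory Real Set

noncomputable section

/-- J_λ = ∫_{-1}^1 (1-z²)^λ dz -/
def Jl (l : ℝ) : ℝ := ∫ z in (-1:ℝ)..1, (1 - z^2) ^ l

/-- θ = (γ-1)/2 -/
def th (γ : ℝ) : ℝ := (γ - 1) / 2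

/-- λ = 1/(γ-1) - 1/2 -/
def lam (γ : ℝ) : ℝ := 1 / (γ - 1) - 1 / 2

/-- a_γ = 2√(γκ)/(γ-1) -/
def ag (γ κ : ℝ) : ℝ := 2 * Real.sqrt (γ * κ) / (γ - 1)

/-- c_{γ,κ} = a_γ^{-2/(γ-1)} / J_λ -/
def cgk (γ κ : ℝ) : ℝ := ag γ κ ^ (-(2 / (γ - 1))) / Jl (lam γ)

/-- χ(ρ,ξ) = c_{γ,κ} (a_γ² ρ^{γ-1} - ξ²)_+^λ -/
def chi (γ κ ρ ξ : ℝ) : ℝ :=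
  cgk γ κ * (max (ag γ κ ^ 2 * ρ ^ (γ - 1) - ξ ^ 2) 0) ^ lam γ

/-- vector-valued Maxwellian -/
def Mx (γ κ ρ u ξ : ℝ) : ℝ × ℝ :=
  (chi γ κ ρ (ξ - u), ((1 - th γ) * u + th γ * ξ) * chi γ κ ρ (ξ - u))

/-- domain D = {f₀ > 0} ∪ {0} -/
def Dset : Set (ℝ × ℝ) := {f | 0 < f.1 ∨ f = 0}

/-- kinetic energy H(f,ξ) -/
def Hk (γ κ : ℝ) (f : ℝ × ℝ) (ξ : ℝ) : ℝ :=
  if f = 0 then 0 else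
    th γ / (1 - th γ) * (ξ ^ 2 / 2) * f.1
      + th γ / (2 * cgk γ κ ^ (1 / lam γ)) * (f.1 ^ (1 + 1 / lam γ) / (1 + 1 / lam γ))
      + 1 / (1 - th γ) * (1 / 2) * (f.2 ^ 2 / f.1)
      - th γ / (1 - th γ) * ξ * f.2

/-- u(f,ξ), inverse relation to f = M(ρ,u,ξ) -/
def uf (γ : ℝ) (f : ℝ × ℝ) (ξ : ℝ) : ℝ := (f.2 / f.1 - th γ * ξ) / (1 - th γ)

/-- ρ(f,ξ), inverse relation to f = M(ρ,u,ξ) -/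
def rf (γ κ : ℝ) (f : ℝ × ℝ) (ξ : ℝ) : ℝ :=
  ag γ κ ^ (-(2 / (γ - 1))) *
    (((f.2 / f.1 - ξ) / (1 - th γ)) ^ 2 + (f.1 / cgk γ κ) ^ (1 / lam γ)) ^ (1 / (γ - 1))

/-- kinetic Riemann invariant ω₁(f,ξ) -/
def om1 (γ κ : ℝ) (f : ℝ × ℝ) (ξ : ℝ) : ℝ :=
  uf γ f ξ - ag γ κ * rf γ κ f ξ ^ th γ

/-- kinetic Riemann invariant ω₂(f,ξ) -/
def om2 (γ κ : ℝ) (f : ℝ × ℝ) (ξ : ℝ) : ℝ :=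
  uf γ f ξ + ag γ κ * rf γ κ f ξ ^ th γ

/-- Υ_{l}(z) = ∫_1^z (y²-1)^l dy -/
def Ups (l z : ℝ) : ℝ := ∫ y in (1:ℝ)..z, (y ^ 2 - 1) ^ l

/-- entropy kernel Φ(ρ,u,ξ,v) -/
def Phi (γ κ ρ u ξ v : ℝ) : ℝ :=
  let w1 := u - ag γ κ * ρ ^ th γ
  let w2 := u + ag γ κ * ρ ^ th γ
  if w1 < ξ ∧ ξ < w2 ∧ w1 < v ∧ v < w2 then
    (1 - th γ) ^ 2 / th γ * (cgk γ κ / Jl (lam γ)) * |ξ - v| ^ (2 * lam γ - 1) *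
      Ups (lam γ - 1) (((ξ + v) * (w1 + w2) - 2 * (w1 * w2 + ξ * v)) / ((w2 - w1) * |ξ - v|))
  else 0

/-- kinetic entropy H_S(f,ξ) -/
def HS (γ κ : ℝ) (S : ℝ → ℝ) (f : ℝ × ℝ) (ξ : ℝ) : ℝ :=
  if f = 0 then 0 else ∫ v : ℝ, Phi γ κ (rf γ κ f ξ) (uf γ f ξ) ξ v * S v

/-- kinetic invariant domain D̃_ξ -/
def Dtil (γ κ ωmin ωmax ξ : ℝ) : Set (ℝ × ℝ) :=
  {f | f ∈ Dset ∧ (f = 0 ∨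
    (ωmin ≤ om1 γ κ f ξ ∧ om1 γ κ f ξ ≤ om2 γ κ f ξ ∧ om2 γ κ f ξ ≤ ωmax))}

/-- T_S(ρ,u) (subdifferential of η_S) -/
def TS (γ κ : ℝ) (S : ℝ → ℝ) (ρ u : ℝ) : ℝ × ℝ :=
  ((1 / Jl (lam γ)) * ∫ z in (-1:ℝ)..1, (1 - z ^ 2) ^ lam γ *
      (S (u + ag γ κ * ρ ^ th γ * z)
        + (th γ * ag γ κ * ρ ^ th γ * z - u) * deriv S (u + ag γ κ * ρ ^ th γ * z)),
   (1 / Jl (lam γ)) * ∫ z in (-1:ℝ)..1, (1 - z ^ 2) ^ lam γ *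
      deriv S (u + ag γ κ * ρ ^ th γ * z))

/-- inner product on ℝ² -/
def dot (a b : ℝ × ℝ) : ℝ := a.1 * b.1 + a.2 * b.2

lemma cont_rpow {l : ℝ} (hl : 0 < l) : Continuous fun x : ℝ => x ^ l :=
  continuous_iff_continuousAt.2 fun x => Real.continuousAt_rpow_const x l (Or.inr hl.le)

lemma cont1 {l : ℝ} (hl : 0 < l) : Continuous fun z : ℝ => (1 - z^2) ^ l :=
  (cont_rpow hl).comp (by continuity)

lemma hderiv1 {l : ℝ} (hl : 0 < l) (z : ℝ) :
    HasDerivAt (fun z : ℝ => (1 - z^2) ^ (l+1)) ((l+1) * (1 - z^2) ^ l * (-(2*z))) z := by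
  have h1 : HasDerivAt (fun z : ℝ => 1 - z^2) (-(2*z)) z := by
    simpa using ((hasDerivAt_pow 2 z).const_sub 1)
  have h2 := (Real.hasDerivAt_rpow_const (x := 1 - z^2) (p := l+1)
    (Or.inr (by linarith))).comp z h1
  simpa [Function.comp_def, add_sub_cancel_right, mul_comm, mul_assoc, mul_left_comm] using h2

lemma Lzero {l : ℝ} (hl : 0 < l) : ∫ z in (-1:ℝ)..1, z * (1 - z^2) ^ l = 0 := by
  have key : ∫ z in (-1:ℝ)..1, (l+1) * (1 - z^2) ^ l * (-(2*z)) = 0 := by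
    rw [intervalIntegral.integral_eq_sub_of_hasDerivAt
      (fun z _ => hderiv1 hl z)
      (by apply Continuous.intervalIntegrable; exact (continuous_const.mul (cont1 hl)).mul (by continuity))]
    norm_num [Real.zero_rpow (by linarith : l + 1 ≠ 0)]
  have : ∫ z in (-1:ℝ)..1, (-(2*(l+1))) * (z * (1 - z^2) ^ l) = 0 := by
    rw [← key]; apply intervalIntegral.integral_congr; intro z _; ring
  rw [intervalIntegral.integral_const_mul] at this
  rcases mul_eq_zero.1 this with h | h
  · exact absurd h (by intro h; nlinarith)
  · exact h

lemma Kval {l : ℝ} (hl : 0 < l) :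
    (2*l+3) * (∫ z in (-1:ℝ)..1, z^2 * (1 - z^2) ^ l) = Jl l := by
  have hK : IntervalIntegrable (fun z : ℝ => z^2 * (1 - z^2) ^ l) volume (-1) 1 :=
    ((continuous_pow 2).mul (cont1 hl)).intervalIntegrable _ _
  have hJ : IntervalIntegrable (fun z : ℝ => (1 - z^2) ^ l) volume (-1) 1 :=
    (cont1 hl).intervalIntegrable _ _
  have key : ∫ z in (-1:ℝ)..1,
      (1 * (1 - z^2) ^ (l+1) + z * ((l+1) * (1 - z^2) ^ l * (-(2*z)))) = 0 := by
    rw [intervalIntegral.integral_eq_sub_of_hasDerivAt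
      (f := fun z : ℝ => z * (1 - z^2) ^ (l+1))
      (fun z _ => (hasDerivAt_id' (x := z)).mul (hderiv1 hl z))
      (by apply Continuous.intervalIntegrable
          exact (continuous_const.mul (cont1 (by linarith : (0:ℝ) < l+1))).add
            (continuous_id.mul ((continuous_const.mul (cont1 hl)).mul (by continuity))))]
    norm_num [Real.zero_rpow (by linarith : l + 1 ≠ 0)]
  have expand : ∫ z in (-1:ℝ)..1,
      (1 * (1 - z^2) ^ (l+1) + z * ((l+1) * (1 - z^2) ^ l * (-(2*z))))
      = Jl l - (2*l+3) * (∫ z in (-1:ℝ)..1, z^2 * (1 - z^2) ^ l) := by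
    have congr1 : ∀ z ∈ Set.uIcc (-1:ℝ) 1,
        (1 * (1 - z^2) ^ (l+1) + z * ((l+1) * (1 - z^2) ^ l * (-(2*z))))
        = (1 - z^2) ^ l - (2*l+3) * (z^2 * (1 - z^2) ^ l) := by
      intro z hz
      rw [Set.uIcc_of_le (by norm_num), Set.mem_Icc] at hz
      have h0 : (0:ℝ) ≤ 1 - z^2 := by nlinarith [hz.1, hz.2]
      rw [Real.rpow_add' h0 (by linarith : l + 1 ≠ 0), Real.rpow_one]
      ring
    rw [intervalIntegral.integral_congr congr1, intervalIntegral.integral_sub hJ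
      (hK.const_mul (2*l+3)),
      intervalIntegral.integral_const_mul]
    rfl
  have := expand ▸ key
  linarith

lemma Jpos {l : ℝ} (hl : 0 < l) : 0 < Jl l := by
  apply intervalIntegral.intervalIntegral_pos_of_pos_on
    ((cont1 hl).intervalIntegrable _ _)
    (fun x hx => Real.rpow_pos_of_pos (by nlinarith [hx.1, hx.2]) l)
    (by norm_num)

variable {γ κ : ℝ}

lemma hlam (hγ : 1 < γ) (hγ' : γ < 3) : 0 < lam γ := by
  have h1 : (0:ℝ) < γ - 1 := by linarith
  have h2 : (1:ℝ)/2 < 1/(γ-1) := one_div_lt_one_div_of_lt h1 (by linarith)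
  unfold lam; linarith

lemma hag (hκ : 0 < κ) (hγ : 1 < γ) : 0 < ag γ κ :=
  div_pos (by positivity) (by linarith)

lemma scale (hκ : 0 < κ) (hγ : 1 < γ) (hγ' : γ < 3) {ρ : ℝ} (hρ : 0 < ρ) :
    cgk γ κ * (ag γ κ * ρ ^ th γ) ^ (2 * lam γ + 1) * Jl (lam γ) = ρ := by
  have ha := hag hκ hγ
  have hJ := Jpos (hlam hγ hγ')
  have h1 : (0:ℝ) < γ - 1 := by linarith
  have e1 : 2 * lam γ + 1 = 2 / (γ - 1) := by unfold lam; field_simp; ring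
  have e2 : th γ * (2 / (γ - 1)) = 1 := by unfold th; field_simp
  have hmul : (ag γ κ * ρ ^ th γ) ^ (2 * lam γ + 1)
      = ag γ κ ^ (2/(γ-1)) * ρ := by
    rw [Real.mul_rpow ha.le (Real.rpow_nonneg hρ.le _), e1, ← Real.rpow_mul hρ.le, e2,
      Real.rpow_one]
  have hA : (0:ℝ) < ag γ κ ^ (2/(γ-1)) := Real.rpow_pos_of_pos ha _
  rw [hmul, cgk, Real.rpow_neg ha.le]
  field_simp

lemma moment (hκ : 0 < κ) (hγ : 1 < γ) (hγ' : γ < 3) {ρ : ℝ} (hρ : 0 < ρ) (u : ℝ)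
    (P : ℝ → ℝ) (hP : Continuous P) :
    ∫ ξ : ℝ, P ξ * chi γ κ ρ (ξ - u)
      = cgk γ κ * (ag γ κ * ρ ^ th γ) ^ (2 * lam γ + 1) *
          ∫ z in (-1:ℝ)..1, P (u + ag γ κ * ρ ^ th γ * z) * (1 - z^2) ^ lam γ := by
  have hl := hlam hγ hγ'
  have ha := hag hκ hγ
  set b := ag γ κ * ρ ^ th γ with hbdef
  have hb : 0 < b := mul_pos ha (Real.rpow_pos_of_pos hρ _)
  have hb2 : ag γ κ ^ 2 * ρ ^ (γ - 1) = b ^ 2 := by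
    have h2 : (ρ ^ th γ) ^ (2:ℕ) = ρ ^ (γ - 1) := by
      rw [← Real.rpow_natCast (ρ ^ th γ) 2, ← Real.rpow_mul hρ.le]
      norm_num [th]
    rw [hbdef, mul_pow, h2]
  -- vanishing outside [u-b, u+b]
  have hvan : ∀ ξ : ℝ, ξ ∉ Icc (u - b) (u + b) → P ξ * chi γ κ ρ (ξ - u) = 0 := by
    intro ξ hξ
    have : b ^ 2 < (ξ - u) ^ 2 := by
      rw [mem_Icc, not_and_or] at hξ
      rcases hξ with h | h <;> push_neg at h <;> nlinarith
    unfold chi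
    rw [hb2, max_eq_right (by linarith), Real.zero_rpow hl.ne']
    ring
  rw [← MeasureTheory.setIntegral_eq_integral_of_forall_compl_eq_zero hvan,
    MeasureTheory.integral_Icc_eq_integral_Ioc,
    ← intervalIntegral.integral_of_le (by linarith : u - b ≤ u + b)]
  have hsub : (∫ ξ in (u - b)..(u + b), P ξ * chi γ κ ρ (ξ - u))
      = b • ∫ z in (-1:ℝ)..1, P (u + b * z) * chi γ κ ρ (u + b * z - u) := by
    rw [intervalIntegral.smul_integral_comp_add_mul (fun ξ => P ξ * chi γ κ ρ (ξ - u)) b u]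
    norm_num [mul_comm, sub_eq_add_neg]
  rw [hsub]
  have hcongr : ∀ z ∈ Set.uIcc (-1:ℝ) 1,
      P (u + b * z) * chi γ κ ρ (u + b * z - u)
        = (cgk γ κ * (b ^ 2) ^ lam γ) * (P (u + b * z) * (1 - z^2) ^ lam γ) := by
    intro z hz
    rw [Set.uIcc_of_le (by norm_num), Set.mem_Icc] at hz
    have h0 : (0:ℝ) ≤ 1 - z^2 := by nlinarith [hz.1, hz.2]
    unfold chi
    have heq : ag γ κ ^ 2 * ρ ^ (γ-1) - (u + b*z - u)^2 = b^2 * (1 - z^2) := by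
      rw [hb2]; ring
    rw [heq, max_eq_left (by positivity), Real.mul_rpow (by positivity) h0]
    ring
  rw [intervalIntegral.integral_congr hcongr, intervalIntegral.integral_const_mul]
  have hpow : b * (cgk γ κ * (b^2) ^ lam γ) = cgk γ κ * b ^ (2*lam γ + 1) := by
    have h3 : ((b:ℝ)^(2:ℕ)) ^ lam γ = b ^ (2*lam γ) := by
      rw [← Real.rpow_natCast b 2, ← Real.rpow_mul hb.le]; norm_num
    rw [h3, Real.rpow_add hb, Real.rpow_one]; ring
  rw [smul_eq_mul, ← mul_assoc, hpow, mul_assoc]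


theorem stmt2 (γ κ : ℝ) (hκ : 0 < κ) (hγ : 1 < γ) (hγ' : γ < 3)
    (ρ u : ℝ) (hρ : 0 ≤ ρ) :
    (∫ ξ : ℝ, ξ * (Mx γ κ ρ u ξ).1) = ρ * u ∧
    (∫ ξ : ℝ, ξ * (Mx γ κ ρ u ξ).2) = ρ * u ^ 2 + κ * ρ ^ γ := by
  have hl := hlam hγ hγ'
  have ha := hag hκ hγ
  have hJ := Jpos hl
  rcases hρ.eq_or_lt with h0 | hρ'
  · -- ρ = 0
    subst h0
    have hchi : ∀ x : ℝ, chi γ κ 0 x = 0 := by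
      intro x
      unfold chi
      rw [Real.zero_rpow (sub_ne_zero.2 (by linarith : γ ≠ 1)), mul_zero,
        zero_sub, max_eq_right (neg_nonpos.2 (sq_nonneg x)), Real.zero_rpow hl.ne', mul_zero]
    simp [Mx, hchi, Real.zero_rpow (by linarith : (γ:ℝ) ≠ 0)]
  · -- ρ > 0
    set b := ag γ κ * ρ ^ th γ with hbdef
    have hb : 0 < b := mul_pos ha (Real.rpow_pos_of_pos hρ' _)
    have hsc := scale hκ hγ hγ' hρ'
    have hIJ : IntervalIntegrable (fun z : ℝ => (1 - z^2) ^ lam γ) volume (-1) 1 :=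
      (cont1 hl).intervalIntegrable _ _
    have hIL : IntervalIntegrable (fun z : ℝ => z * (1 - z^2) ^ lam γ) volume (-1) 1 :=
      (continuous_id.mul (cont1 hl)).intervalIntegrable _ _
    have hIK : IntervalIntegrable (fun z : ℝ => z^2 * (1 - z^2) ^ lam γ) volume (-1) 1 :=
      ((continuous_pow 2).mul (cont1 hl)).intervalIntegrable _ _
    constructor
    · have := moment hκ hγ hγ' hρ' u (fun ξ => ξ) continuous_id
      simp only [Mx]
      rw [this]
      have I1 : (∫ z in (-1:ℝ)..1, (u + b * z) * (1 - z^2) ^ lam γ) = u * Jl (lam γ) := by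
        have e : (fun z : ℝ => (u + b * z) * (1 - z^2) ^ lam γ)
            = fun z : ℝ => u * (1 - z^2) ^ lam γ + b * (z * (1 - z^2) ^ lam γ) :=
          funext fun z => by ring
        rw [e, intervalIntegral.integral_add (hIJ.const_mul u) (hIL.const_mul b),
          intervalIntegral.integral_const_mul, intervalIntegral.integral_const_mul,
          Lzero hl, Jl]
        ring
      rw [← hbdef, I1]
      calc cgk γ κ * b ^ (2 * lam γ + 1) * (u * Jl (lam γ))
          = cgk γ κ * b ^ (2 * lam γ + 1) * Jl (lam γ) * u := by ring
        _ = ρ * u := by rw [hsc]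
    · have hPc : Continuous fun ξ : ℝ => ξ * ((1 - th γ) * u + th γ * ξ) := by continuity
      have e0 : (fun ξ : ℝ => ξ * (((1 - th γ) * u + th γ * ξ) * chi γ κ ρ (ξ - u)))
          = fun ξ : ℝ => (ξ * ((1 - th γ) * u + th γ * ξ)) * chi γ κ ρ (ξ - u) :=
        funext fun ξ => by ring
      simp only [Mx]
      rw [e0, moment hκ hγ hγ' hρ' u _ hPc, ← hbdef]
      have I2 : (∫ z in (-1:ℝ)..1,
            ((u + b * z) * ((1 - th γ) * u + th γ * (u + b * z))) * (1 - z^2) ^ lam γ)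
          = u^2 * Jl (lam γ) + th γ * b^2 * ∫ z in (-1:ℝ)..1, z^2 * (1 - z^2) ^ lam γ := by
        have e : (fun z : ℝ => ((u + b * z) * ((1 - th γ) * u + th γ * (u + b * z))) * (1 - z^2) ^ lam γ)
            = fun z : ℝ => u^2 * (1 - z^2) ^ lam γ
                + ((1 + th γ) * u * b) * (z * (1 - z^2) ^ lam γ)
                + (th γ * b^2) * (z^2 * (1 - z^2) ^ lam γ) :=
          funext fun z => by ring
        rw [e, intervalIntegral.integral_add (((hIJ.const_mul _).add (hIL.const_mul _)))
            (hIK.const_mul _),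
          intervalIntegral.integral_add (hIJ.const_mul _) (hIL.const_mul _),
          intervalIntegral.integral_const_mul, intervalIntegral.integral_const_mul,
          intervalIntegral.integral_const_mul, Lzero hl, Jl]
        ring
      rw [I2]
      set K := ∫ z in (-1:ℝ)..1, z^2 * (1 - z^2) ^ lam γ with hKdef
      have hKv : (2 * lam γ + 3) * K = Jl (lam γ) := Kval hl
      have e3 : th γ * ag γ κ ^ 2 = (2 * lam γ + 3) * κ := by
        have hγ0 : (0:ℝ) ≤ γ := by linarith
        have hsq : Real.sqrt γ * Real.sqrt κ * (Real.sqrt γ * Real.sqrt κ) = γ * κ := by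
          rw [mul_mul_mul_comm, Real.mul_self_sqrt hγ0, Real.mul_self_sqrt hκ.le]
        have h1 : (0:ℝ) < γ - 1 := by linarith
        unfold th ag lam
        field_simp
        linear_combination 2 * Real.sq_sqrt (mul_nonneg hγ0 hκ.le)
      have hb2 : b ^ 2 = ag γ κ ^ 2 * ρ ^ (γ - 1) := by
        have h2 : (ρ ^ th γ) ^ (2:ℕ) = ρ ^ (γ - 1) := by
          rw [← Real.rpow_natCast (ρ ^ th γ) 2, ← Real.rpow_mul hρ'.le]
          norm_num [th]
        rw [hbdef, mul_pow, h2]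
      have hrg : ρ * ρ ^ (γ - 1) = ρ ^ γ := by
        nth_rewrite 1 [← Real.rpow_one ρ]
        rw [← Real.rpow_add hρ']
        norm_num
      have hKval : th γ * b^2 * K = κ * ρ^(γ-1) * Jl (lam γ) := by
        rw [hb2, ← hKv]
        linear_combination (ρ^(γ-1) * K) * e3
      rw [hKval, ← hbdef] at *
      rw [← hbdef] at hsc
      calc cgk γ κ * b ^ (2 * lam γ + 1) * (u ^ 2 * Jl (lam γ) + κ * ρ ^ (γ-1) * Jl (lam γ))
          = (cgk γ κ * b ^ (2 * lam γ + 1) * Jl (lam γ)) * u ^ 2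
            + (cgk γ κ * b ^ (2 * lam γ + 1) * Jl (lam γ)) * (κ * ρ ^ (γ-1)) := by ring
        _ = ρ * u ^ 2 + κ * ρ ^ γ := by rw [hsc, ← hrg]; ring
end
end

section
/- The macroscopic entropy pair corresponding to S(v) = v²/2 is the physical energy pair: η(ρ,u) = ∫_ℝ χ(ρ, v-u)·(v²/2) dv = ρu²/2 + (κ/(γ-1)) ρ^γ, and G(ρ,u) = ∫_ℝ ((1-θ)u + θv) χ(ρ, v-u)·(v²/2) dv = ρu³/2 + (γκ/(γ-1)) ρ^γ u, for all ρ ≥ 0 and u ∈ ℝ. -/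
open MeasureTheory Real Set

noncomputable section

-- continuity helper
lemma cont_base (l : ℝ) (hl : 0 ≤ l) : Continuous (fun z : ℝ => (1 - z^2) ^ l) :=
  (Real.continuous_rpow_const hl).comp (by continuity)

lemma odd_moment (l : ℝ) (h : ℝ → ℝ) (hodd : ∀ z, h (-z) = - h z) :
    (∫ z in (-1:ℝ)..1, (1 - z^2) ^ l * h z) = 0 := by
  have := intervalIntegral.integral_comp_neg (a := (-1:ℝ)) (b := 1)
      (fun z => (1 - z^2) ^ l * h z)
  simp only [neg_neg] at this
  have h2 : (∫ z in (-1:ℝ)..1, (1 - (-z)^2) ^ l * h (-z))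
      = ∫ z in (-1:ℝ)..1, -((1 - z^2) ^ l * h z) := by
    apply intervalIntegral.integral_congr
    intro z _
    dsimp only; rw [hodd z, neg_sq]; ring
  rw [h2, intervalIntegral.integral_neg] at this
  linarith

lemma second_moment (l : ℝ) (hl : 0 < l) :
    (∫ z in (-1:ℝ)..1, (1 - z^2) ^ l * z^2) = Jl l / (2*l+3) := by
  set M2 := ∫ z in (-1:ℝ)..1, (1 - z^2) ^ l * z^2 with hM2
  have hderiv : ∀ z : ℝ, HasDerivAt (fun z : ℝ => z * (1 - z^2) ^ (l+1))
      ((1 - z^2) ^ (l+1) - 2*(l+1) * ((1 - z^2) ^ l * z^2)) z := by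
    intro z
    have h1 : HasDerivAt (fun z : ℝ => 1 - z^2) (-(2*z)) z := by
      simpa using ((hasDerivAt_pow 2 z).const_sub 1)
    have h2 : HasDerivAt (fun z : ℝ => (1 - z^2) ^ (l+1))
        ((l+1) * (1 - z^2) ^ (l+1-1) * (-(2*z))) z :=
      (h1.rpow_const (p := l+1) (Or.inr (by linarith))).congr_deriv (by ring)
    have : HasDerivAt (fun z : ℝ => z * (1 - z^2) ^ (l+1))
        (1 * (1 - z^2) ^ (l+1) + z * ((l+1) * (1 - z^2) ^ (l+1-1) * (-(2*z)))) z :=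
      (hasDerivAt_id' z).mul h2
    convert this using 1
    simp only [id_eq, add_sub_cancel_right]
    ring
  have hcont : Continuous (fun z : ℝ =>
      (1 - z^2) ^ (l+1) - 2*(l+1) * ((1 - z^2) ^ l * z^2)) := by
    have c1 := cont_base (l+1) (by linarith)
    have c2 := cont_base l hl.le
    continuity
  have hFTC := intervalIntegral.integral_eq_sub_of_hasDerivAt
      (f := fun z : ℝ => z * (1 - z^2) ^ (l+1))
      (a := (-1:ℝ)) (b := 1)
      (fun z _ => hderiv z) (hcont.intervalIntegrable _ _)
  have hzero : ((1:ℝ) * (1 - 1^2) ^ (l+1) - (-1) * (1 - (-1)^2) ^ (l+1)) = 0 := by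
    rw [show (1:ℝ) - 1^2 = 0 by ring, show (1:ℝ) - (-1:ℝ)^2 = 0 by ring,
      Real.zero_rpow (by linarith)]
    ring
  rw [hzero] at hFTC
  have i1 : IntervalIntegrable (fun z : ℝ => (1 - z^2) ^ (l+1)) volume (-1) 1 :=
    (cont_base (l+1) (by linarith)).intervalIntegrable _ _
  have i2 : IntervalIntegrable (fun z : ℝ => 2*(l+1) * ((1 - z^2) ^ l * z^2)) volume (-1) 1 := by
    have := cont_base l hl.le
    exact (by continuity : Continuous fun z : ℝ => 2*(l+1) * ((1 - z^2) ^ l * z^2)).intervalIntegrable _ _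
  rw [intervalIntegral.integral_sub i1 i2, intervalIntegral.integral_const_mul] at hFTC
  have hsplit : (∫ z in (-1:ℝ)..1, (1 - z^2) ^ (l+1)) = Jl l - M2 := by
    have e1 : (∫ z in (-1:ℝ)..1, (1 - z^2) ^ (l+1))
        = ∫ z in (-1:ℝ)..1, ((1 - z^2) ^ l - (1 - z^2) ^ l * z^2) := by
      apply intervalIntegral.integral_congr
      intro z hz
      dsimp only
      rw [Set.uIcc_of_le (by norm_num)] at hz
      have hz2 : (0:ℝ) ≤ 1 - z^2 := by nlinarith [hz.1, hz.2]
      rcases eq_or_lt_of_le hz2 with h | h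
      · rw [← h, Real.zero_rpow (by linarith), Real.zero_rpow (by linarith)]; ring
      · rw [Real.rpow_add_one (ne_of_gt h)]
        ring
    rw [e1, intervalIntegral.integral_sub ((cont_base l hl.le).intervalIntegrable _ _)
      (by have := cont_base l hl.le;
          exact (by continuity : Continuous fun z : ℝ => (1 - z^2) ^ l * z^2).intervalIntegrable _ _)]
    rfl
  rw [hsplit] at hFTC
  have : (2*l+3) * M2 = Jl l := by linarith
  field_simp at this ⊢
  linarith

lemma Jl_pos (l : ℝ) (hl : 0 < l) : 0 < Jl l := by
  apply intervalIntegral.intervalIntegral_pos_of_pos_on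
    ((cont_base l hl.le).intervalIntegrable _ _)
  · intro x hx
    apply Real.rpow_pos_of_pos
    nlinarith [hx.1, hx.2]
  · norm_num

lemma reduce (l b : ℝ) (hl : 0 < l) (hb : 0 < b) (g : ℝ → ℝ) :
    (∫ ξ : ℝ, (max (b^2 - ξ^2) 0) ^ l * g ξ)
      = (b^2) ^ l * b * ∫ z in (-1:ℝ)..1, (1 - z^2) ^ l * g (b*z) := by
  set f : ℝ → ℝ := fun ξ => (max (b^2 - ξ^2) 0) ^ l * g ξ with hf
  have hvanish : ∀ ξ : ℝ, ξ ∉ Set.Ioc (-b) b → f ξ = 0 := by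
    intro ξ hξ
    have : b^2 - ξ^2 ≤ 0 := by
      simp only [Set.mem_Ioc, not_and_or, not_lt, not_le] at hξ
      rcases hξ with h | h
      · nlinarith
      · nlinarith
    simp only [hf]
    rw [max_eq_right this, Real.zero_rpow (ne_of_gt hl)]
    ring
  have step1 : (∫ ξ : ℝ, f ξ) = ∫ ξ in Set.Ioc (-b) b, f ξ :=
    (MeasureTheory.setIntegral_eq_integral_of_forall_compl_eq_zero hvanish).symm
  have step2 : (∫ ξ in Set.Ioc (-b) b, f ξ) = ∫ ξ in (-b)..b, f ξ :=
    (intervalIntegral.integral_of_le (by linarith)).symm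
  have step3 : (∫ z in (-1:ℝ)..1, f (b * z))
      = b⁻¹ • ∫ ξ in (b * (-1))..(b*1), f ξ :=
    intervalIntegral.integral_comp_mul_left f (ne_of_gt hb)
  have step4 : (∫ z in (-1:ℝ)..1, f (b * z))
      = (b^2) ^ l * ∫ z in (-1:ℝ)..1, (1 - z^2) ^ l * g (b*z) := by
    rw [← intervalIntegral.integral_const_mul]
    apply intervalIntegral.integral_congr
    intro z hz
    rw [Set.uIcc_of_le (by norm_num)] at hz
    simp only [hf]
    have hz2 : (0:ℝ) ≤ 1 - z^2 := by nlinarith [hz.1, hz.2]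
    have hbb : (0:ℝ) ≤ b^2 * (1 - z^2) := by positivity
    have h1 : max (b^2 - (b*z)^2) 0 = b^2 * (1 - z^2) := by
      rw [max_eq_left (by nlinarith)]
      ring
    rw [h1, Real.mul_rpow (by positivity) hz2]
    ring
  rw [mul_neg_one, mul_one] at step3
  rw [step4, smul_eq_mul] at step3
  rw [step1, step2]
  have hb' : b ≠ 0 := ne_of_gt hb
  field_simp at step3
  linarith

lemma master (l : ℝ) (hl : 0 < l) (A B C D : ℝ) :
    (∫ z in (-1:ℝ)..1, (1 - z^2) ^ l * (A + B*z + C*z^2 + D*z^3))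
      = A * Jl l + C * (Jl l / (2*l+3)) := by
  have cb := cont_base l hl.le
  have e : (fun z : ℝ => (1 - z^2) ^ l * (A + B*z + C*z^2 + D*z^3))
      = fun z : ℝ => A * (1 - z^2) ^ l + B * ((1 - z^2) ^ l * z)
          + C * ((1 - z^2) ^ l * z^2) + D * ((1 - z^2) ^ l * z^3) := by
    funext z; ring
  have iA : IntervalIntegrable (fun z : ℝ => A * (1 - z^2) ^ l) volume (-1) 1 :=
    (by continuity : Continuous fun z : ℝ => A * (1 - z^2) ^ l).intervalIntegrable _ _
  have iB : IntervalIntegrable (fun z : ℝ => B * ((1 - z^2) ^ l * z)) volume (-1) 1 :=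
    (by continuity : Continuous fun z : ℝ => B * ((1 - z^2) ^ l * z)).intervalIntegrable _ _
  have iC : IntervalIntegrable (fun z : ℝ => C * ((1 - z^2) ^ l * z^2)) volume (-1) 1 :=
    (by continuity : Continuous fun z : ℝ => C * ((1 - z^2) ^ l * z^2)).intervalIntegrable _ _
  have iD : IntervalIntegrable (fun z : ℝ => D * ((1 - z^2) ^ l * z^3)) volume (-1) 1 :=
    (by continuity : Continuous fun z : ℝ => D * ((1 - z^2) ^ l * z^3)).intervalIntegrable _ _
  rw [e, intervalIntegral.integral_add (((iA.add iB).add iC)) iD,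
    intervalIntegral.integral_add (iA.add iB) iC,
    intervalIntegral.integral_add iA iB,
    intervalIntegral.integral_const_mul, intervalIntegral.integral_const_mul,
    intervalIntegral.integral_const_mul, intervalIntegral.integral_const_mul,
    second_moment l hl,
    odd_moment l (fun z => z) (fun z => rfl),
    odd_moment l (fun z => z^3) (fun z => by ring)]
  show A * Jl l + B * 0 + C * (Jl l / (2*l+3)) + D * 0 = _
  ring

theorem stmt8 (γ κ : ℝ) (hκ : 0 < κ) (hγ : 1 < γ) (hγ' : γ < 3)
    (ρ u : ℝ) (hρ : 0 ≤ ρ) :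
    (∫ v : ℝ, chi γ κ ρ (v - u) * (v ^ 2 / 2))
        = ρ * u ^ 2 / 2 + κ / (γ - 1) * ρ ^ γ ∧
    (∫ v : ℝ, ((1 - th γ) * u + th γ * v) * chi γ κ ρ (v - u) * (v ^ 2 / 2))
        = ρ * u ^ 3 / 2 + γ * κ / (γ - 1) * ρ ^ γ * u := by
  have hγ1 : (0:ℝ) < γ - 1 := by linarith
  have hγ0 : (0:ℝ) < γ := by linarith
  have hl : 0 < lam γ := by
    rw [lam]
    have : (1:ℝ)/2 < 1/(γ-1) := by
      rw [div_lt_div_iff₀ (by norm_num) hγ1]; linarith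
    linarith
  have hJ : 0 < Jl (lam γ) := Jl_pos _ hl
  have hJ' : Jl (lam γ) ≠ 0 := ne_of_gt hJ
  have ha : 0 < ag γ κ := by
    rw [ag]
    have : 0 < Real.sqrt (γ * κ) := Real.sqrt_pos.mpr (by positivity)
    positivity
  have ha2 : ag γ κ ^ 2 = 4 * γ * κ / (γ-1)^2 := by
    rw [ag, div_pow, mul_pow, Real.sq_sqrt (by positivity)]
    ring
  rcases eq_or_lt_of_le hρ with hρ0 | hρpos
  · -- ρ = 0
    subst hρ0
    have hz : ∀ ξ : ℝ, chi γ κ 0 ξ = 0 := by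
      intro ξ
      rw [chi, Real.zero_rpow (ne_of_gt hγ1), mul_zero, zero_sub,
        max_eq_right (neg_nonpos.mpr (sq_nonneg ξ)), Real.zero_rpow (ne_of_gt hl), mul_zero]
    rw [Real.zero_rpow (ne_of_gt hγ0)]
    constructor <;> simp [hz]
  · -- ρ > 0
    set l := lam γ with hldef
    set a := ag γ κ with hadef
    set b := a * ρ ^ ((γ-1)/2) with hbdef
    have hb : 0 < b := by
      have := Real.rpow_pos_of_pos hρpos ((γ-1)/2)
      positivity
    have hb2 : b^2 = a^2 * ρ^(γ-1) := by
      rw [hbdef, mul_pow]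
      congr 1
      rw [← Real.rpow_natCast (ρ ^ ((γ-1)/2)) 2, ← Real.rpow_mul hρ]
      norm_num
    have hchix : ∀ ξ : ℝ, chi γ κ ρ ξ = cgk γ κ * (max (b^2 - ξ^2) 0) ^ l := by
      intro ξ; rw [chi, hb2]
    -- the scalar identity
    have hapow : ∀ s t : ℝ, a ^ (s:ℝ) * a ^ (t:ℝ) = a ^ (s+t) :=
      fun s t => (Real.rpow_add ha s t).symm
    have hb2l : (b^2 : ℝ) ^ l = a ^ (2*l) * ρ ^ ((γ-1)*l) := by
      rw [hb2, Real.mul_rpow (by positivity) (by positivity)]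
      congr 1
      · rw [← Real.rpow_natCast a 2, ← Real.rpow_mul ha.le]
        norm_num
      · rw [← Real.rpow_mul hρ]
    have hscal : cgk γ κ * ((b^2) ^ l * b) = ρ / Jl l := by
      rw [cgk, hb2l, hbdef, ← hadef, ← hldef]
      rw [div_mul_eq_mul_div]
      congr 1
      calc a ^ (-(2/(γ-1))) * (a ^ (2*l) * ρ ^ ((γ-1)*l) * (a * ρ ^ ((γ-1)/2)))
          = (a ^ (-(2/(γ-1))) * a ^ (2*l) * a ^ (1:ℝ)) *
              (ρ ^ ((γ-1)*l) * ρ ^ ((γ-1)/2)) := by rw [Real.rpow_one]; ring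
        _ = a ^ (-(2/(γ-1)) + 2*l + 1) * ρ ^ ((γ-1)*l + (γ-1)/2) := by
            rw [← Real.rpow_add hρpos, hapow, hapow]
        _ = ρ := by
            rw [show -(2/(γ-1)) + 2*l + 1 = 0 by
                rw [hldef, lam]; field_simp; ring,
              show (γ-1)*l + (γ-1)/2 = 1 by
                rw [hldef, lam]; field_simp; ring,
              Real.rpow_zero, Real.rpow_one, one_mul]
    have hργ : ρ * ρ^(γ-1) = ρ^γ := by
      nth_rewrite 1 [← Real.rpow_one ρ]
      rw [← Real.rpow_add hρpos, show (1:ℝ) + (γ-1) = γ by ring]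
    have h2l3 : 2*l+3 = 2*γ/(γ-1) := by
      rw [hldef, lam]; field_simp; ring
    constructor
    · -- first identity
      have shift : (∫ v : ℝ, chi γ κ ρ (v - u) * (v ^ 2 / 2))
          = ∫ ξ : ℝ, chi γ κ ρ ξ * ((ξ + u)^2 / 2) := by
        rw [← MeasureTheory.integral_sub_right_eq_self
          (fun ξ => chi γ κ ρ ξ * ((ξ + u)^2 / 2)) u]
        congr 1; funext v
        simp [sub_add_cancel]
      rw [shift]
      have pull : (∫ ξ : ℝ, chi γ κ ρ ξ * ((ξ + u)^2 / 2))
          = cgk γ κ * ∫ ξ : ℝ, (max (b^2 - ξ^2) 0) ^ l * ((ξ + u)^2 / 2) := by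
        rw [← MeasureTheory.integral_const_mul]
        congr 1; funext ξ
        rw [hchix ξ]; ring
      rw [pull, reduce l b hl hb (fun ξ => (ξ + u)^2 / 2)]
      have poly : (∫ z in (-1:ℝ)..1, (1 - z^2) ^ l * ((b*z + u)^2 / 2))
          = (u^2/2) * Jl l + (b^2/2) * (Jl l / (2*l+3)) := by
        rw [show (fun z : ℝ => (1 - z^2) ^ l * ((b*z + u)^2 / 2))
            = fun z : ℝ => (1 - z^2) ^ l * (u^2/2 + (u*b)*z + (b^2/2)*z^2 + 0*z^3) by
          funext z; ring]
        rw [master l hl (u^2/2) (u*b) (b^2/2) 0]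
      rw [show (fun z : ℝ => (1 - z^2) ^ l * ((fun ξ => (ξ + u)^2 / 2) (b*z)))
          = fun z : ℝ => (1 - z^2) ^ l * ((b*z + u)^2 / 2) from rfl, poly]
      rw [show cgk γ κ * ((b^2)^l * b * ((u^2/2) * Jl l + (b^2/2) * (Jl l / (2*l+3))))
          = (cgk γ κ * ((b^2)^l * b)) * ((u^2/2) * Jl l + (b^2/2) * (Jl l / (2*l+3))) by ring,
        hscal]
      rw [hb2, ha2, h2l3, ← hργ]
      field_simp
      ring
    · -- second identity
      have shift : (∫ v : ℝ, ((1 - th γ) * u + th γ * v) * chi γ κ ρ (v - u) * (v ^ 2 / 2))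
          = ∫ ξ : ℝ, ((1 - th γ) * u + th γ * (ξ + u)) * chi γ κ ρ ξ * ((ξ + u)^2 / 2) := by
        rw [← MeasureTheory.integral_sub_right_eq_self
          (fun ξ => ((1 - th γ) * u + th γ * (ξ + u)) * chi γ κ ρ ξ * ((ξ + u)^2 / 2)) u]
        congr 1; funext v
        simp [sub_add_cancel]
      rw [shift]
      have pull : (∫ ξ : ℝ, ((1 - th γ) * u + th γ * (ξ + u)) * chi γ κ ρ ξ * ((ξ + u)^2 / 2))
          = cgk γ κ * ∫ ξ : ℝ, (max (b^2 - ξ^2) 0) ^ l *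
              (((1 - th γ) * u + th γ * (ξ + u)) * ((ξ + u)^2 / 2)) := by
        rw [← MeasureTheory.integral_const_mul]
        congr 1; funext ξ
        rw [hchix ξ]; ring
      rw [pull, reduce l b hl hb
        (fun ξ => ((1 - th γ) * u + th γ * (ξ + u)) * ((ξ + u)^2 / 2))]
      have hth : th γ = (γ-1)/2 := rfl
      have poly : (∫ z in (-1:ℝ)..1, (1 - z^2) ^ l *
            (((1 - th γ) * u + th γ * (b*z + u)) * ((b*z + u)^2 / 2)))
          = (u^3/2) * Jl l + (u * b^2 * γ / 2) * (Jl l / (2*l+3)) := by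
        rw [show (fun z : ℝ => (1 - z^2) ^ l *
              (((1 - th γ) * u + th γ * (b*z + u)) * ((b*z + u)^2 / 2)))
            = fun z : ℝ => (1 - z^2) ^ l * (u^3/2
                + (u^2*b*(2+th γ)/2)*z
                + (u * b^2 * γ / 2)*z^2 + (th γ * b^3/2)*z^3) by
          funext z; rw [hth]; ring]
        rw [master l hl _ _ _ _]
      rw [show (fun z : ℝ => (1 - z^2) ^ l *
            ((fun ξ => ((1 - th γ) * u + th γ * (ξ + u)) * ((ξ + u)^2 / 2)) (b*z)))
          = fun z : ℝ => (1 - z^2) ^ l *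
            (((1 - th γ) * u + th γ * (b*z + u)) * ((b*z + u)^2 / 2)) from rfl, poly]
      rw [show cgk γ κ * ((b^2)^l * b * ((u^3/2) * Jl l + (u * b^2 * γ / 2) * (Jl l / (2*l+3))))
          = (cgk γ κ * ((b^2)^l * b)) * ((u^3/2) * Jl l + (u * b^2 * γ / 2) * (Jl l / (2*l+3))) by ring,
        hscal]
      rw [hb2, ha2, h2l3, ← hργ]
      field_simp
      ring
end
end

section
/- Let ξ ∈ ℝ, f ∈ D, and −∞ < ω_min < ω_max < ∞. Then f belongs to the kinetic invariant domain D̃_ξ = {f ∈ D : f = 0 or ω_min ≤ ω₁(f,ξ) ≤ ω₂(f,ξ) ≤ ω_max} if and only if H_{S_ω}(f,ξ) ≤ 0, where S_ω(v) = (v - ω_max)_+² + (ω_min - v)_+². -/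
open MeasureTheory Real Set

noncomputable section

section AuxLemmas

lemma th_pos {γ : ℝ} (hγ : 1 < γ) : 0 < th γ := by unfold th; linarith

lemma th_lt_one {γ : ℝ} (hγ' : γ < 3) : th γ < 1 := by unfold th; linarith

lemma lam_pos {γ : ℝ} (hγ : 1 < γ) (hγ' : γ < 3) : 0 < lam γ := by
  unfold lam
  have h1 : 0 < γ - 1 := by linarith
  have h2 : (1:ℝ)/2 < 1/(γ - 1) := by
    apply one_div_lt_one_div_of_lt h1; linarith
  linarith

lemma ag_pos {γ κ : ℝ} (hκ : 0 < κ) (hγ : 1 < γ) : 0 < ag γ κ := by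
  unfold ag
  apply div_pos _ (by linarith)
  have : 0 < Real.sqrt (γ * κ) := Real.sqrt_pos.mpr (by positivity)
  linarith

lemma Jl_pos_s9 {γ : ℝ} (hγ : 1 < γ) (hγ' : γ < 3) : 0 < Jl (lam γ) := by
  have hlm := lam_pos hγ hγ'
  have hcont : Continuous fun z : ℝ => (1 - z ^ 2) ^ lam γ := by
    apply Continuous.rpow_const (by continuity) (fun x => Or.inr hlm.le)
  exact intervalIntegral.intervalIntegral_pos_of_pos_on
    (hcont.intervalIntegrable _ _)
    (fun x hx => Real.rpow_pos_of_pos (by nlinarith [hx.1, hx.2]) _) (by norm_num)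

lemma cgk_pos {γ κ : ℝ} (hκ : 0 < κ) (hγ : 1 < γ) (hγ' : γ < 3) : 0 < cgk γ κ :=
  div_pos (Real.rpow_pos_of_pos (ag_pos hκ hγ) _) (Jl_pos_s9 hγ hγ')

lemma abs_rpow_II {l : ℝ} (hl : -1 < l) (a b : ℝ) :
    IntervalIntegrable (fun x : ℝ => |x| ^ l) volume a b := by
  have key : ∀ c : ℝ, 0 ≤ c → IntervalIntegrable (fun x : ℝ => |x| ^ l) volume 0 c := by
    intro c hc
    rw [intervalIntegrable_iff, uIoc_of_le hc]
    have h0 : IntervalIntegrable (fun x : ℝ => x ^ l) volume 0 c := intervalIntegral.intervalIntegrable_rpow' hl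
    rw [intervalIntegrable_iff, uIoc_of_le hc] at h0
    apply h0.congr_fun ?_ measurableSet_Ioc
    intro x hx
    simp [abs_of_pos hx.1]
  have key' : ∀ c : ℝ, IntervalIntegrable (fun x : ℝ => |x| ^ l) volume 0 c := by
    intro c
    rcases le_total 0 c with hc | hc
    · exact key c hc
    · have := (IntervalIntegrable.iff_comp_neg (by simp)).mp (key (-c) (by linarith))
      simp only [abs_neg, neg_zero, neg_neg] at this
      exact this
  exact (key' a).symm.trans (key' b)

lemma abs_sub_rpow_II {l : ℝ} (hl : -1 < l) (ξ a b : ℝ) :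
    IntervalIntegrable (fun v : ℝ => |ξ - v| ^ l) volume a b := by
  have := (abs_rpow_II hl (ξ - a) (ξ - b)).comp_sub_left ξ
  simpa using this

end AuxLemmas
section AuxLemmas2

lemma measurable_rpow_const (l : ℝ) : Measurable fun x : ℝ => x ^ l :=
  measurable_of_continuousOn_compl_singleton 0 fun x hx =>
    (Real.continuousAt_rpow_const x l (Or.inl hx)).continuousWithinAt

lemma sq_sub_one_rpow_II {l : ℝ} (hl : -1 < l) {z : ℝ} (hz : 1 ≤ z) :
    IntervalIntegrable (fun y : ℝ => (y ^ 2 - 1) ^ l) volume 1 z := by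
  have hbase : IntervalIntegrable (fun y : ℝ => (y - 1) ^ l) volume 1 z := by
    have := (intervalIntegral.intervalIntegrable_rpow' hl (a := 0) (b := z - 1)).comp_sub_right 1
    simpa using this
  set C : ℝ := max 1 ((z + 1) ^ l) with hCdef
  rw [intervalIntegrable_iff, uIoc_of_le hz]
  rw [intervalIntegrable_iff, uIoc_of_le hz] at hbase
  refine (hbase.const_mul C).mono' ?_ ?_
  · exact ((measurable_rpow_const l).comp
      ((measurable_id.pow_const 2).sub_const 1)).aestronglyMeasurable
  · filter_upwards [MeasureTheory.ae_restrict_mem measurableSet_Ioc] with y hy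
    have hy1 : (1:ℝ) < y := hy.1
    have h1 : (0:ℝ) ≤ y - 1 := by linarith
    have heq : (y ^ 2 - 1 : ℝ) = (y - 1) * (y + 1) := by ring
    rw [Real.norm_eq_abs, abs_of_nonneg (Real.rpow_nonneg (by nlinarith) l), heq,
      Real.mul_rpow h1 (by linarith)]
    rw [mul_comm (C : ℝ)]
    apply mul_le_mul_of_nonneg_left _ (Real.rpow_nonneg h1 l)
    rcases le_or_gt 0 l with hl0 | hl0
    · exact le_trans (Real.rpow_le_rpow (by linarith) (by linarith [hy.2]) hl0) (le_max_right _ _)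
    · exact le_trans (Real.rpow_le_one_of_one_le_of_nonpos (by linarith) hl0.le) (le_max_left _ _)

lemma Ups_nonneg {l z : ℝ} (hz : 1 ≤ z) : 0 ≤ Ups l z := by
  apply intervalIntegral.integral_nonneg hz
  intro y hy
  exact Real.rpow_nonneg (by nlinarith [hy.1]) l

lemma Ups_pos {l z : ℝ} (hl : -1 < l) (hz : 1 < z) : 0 < Ups l z := by
  apply intervalIntegral.intervalIntegral_pos_of_pos_on (sq_sub_one_rpow_II hl hz.le) _ hz
  intro y hy
  exact Real.rpow_pos_of_pos (by nlinarith [hy.1, hy.2]) l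

lemma Ups_contOn {l : ℝ} (hl : -1 < l) : ContinuousOn (Ups l) (Ici 1) := by
  intro z hz
  have hz1 : (1:ℝ) ≤ z := hz
  have h2 : IntervalIntegrable (fun y : ℝ => (y ^ 2 - 1) ^ l) volume 1 (z + 1) :=
    sq_sub_one_rpow_II hl (by linarith)
  have hcont := intervalIntegral.continuousOn_primitive_interval' h2 left_mem_uIcc
  rw [uIcc_of_le (by linarith : (1:ℝ) ≤ z + 1)] at hcont
  have hmem : Icc (1:ℝ) (z + 1) ∈ nhdsWithin z (Ici 1) := by
    rw [show Icc (1:ℝ) (z + 1) = Ici 1 ∩ Iic (z + 1) from rfl]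
    exact inter_mem_nhdsWithin _ (Iic_mem_nhds (by linarith))
  exact (hcont z (by constructor <;> linarith)).mono_of_mem_nhdsWithin hmem

lemma Ups_bound {lm z : ℝ} (hlm : 0 < lm) (hz : 1 ≤ z) :
    Ups (lm - 1) z ≤ z ^ (2 * lm - 1) + z ^ lm / lm := by
  have hz0 : (0:ℝ) < z := lt_of_lt_of_le one_pos hz
  have hl' : (-1:ℝ) < lm - 1 := by linarith
  have h3 : 0 ≤ z ^ lm / lm := div_nonneg (Real.rpow_nonneg hz0.le lm) hlm.le
  have h4 : 0 ≤ z ^ (2 * lm - 1) := Real.rpow_nonneg hz0.le _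
  rcases le_or_gt 1 lm with hl1 | hl1
  · have hmono : ∀ y ∈ Icc (1:ℝ) z, (y ^ 2 - 1) ^ (lm - 1) ≤ (z ^ 2) ^ (lm - 1) := fun y hy =>
      Real.rpow_le_rpow (by nlinarith [hy.1]) (by nlinarith [hy.1, hy.2]) (by linarith)
    have hint := sq_sub_one_rpow_II hl' hz
    have hle := intervalIntegral.integral_mono_on hz hint intervalIntegrable_const hmono
    rw [intervalIntegral.integral_const, smul_eq_mul] at hle
    have h2 : (z - 1) * (z ^ 2) ^ (lm - 1) ≤ z ^ (2 * lm - 1) := by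
      have e1 : ((z:ℝ) ^ 2) ^ (lm - 1) = z ^ (2 * lm - 2) := by
        rw [← Real.rpow_natCast z 2, ← Real.rpow_mul hz0.le]
        norm_num
        ring_nf
      have e2 : z ^ (2 * lm - 1) = z * z ^ (2 * lm - 2) := by
        rw [show (2 * lm - 1 : ℝ) = 1 + (2 * lm - 2) by ring, Real.rpow_add hz0,
          Real.rpow_one]
      rw [e1, e2]
      have := Real.rpow_nonneg hz0.le (2 * lm - 2)
      nlinarith
    calc Ups (lm - 1) z ≤ (z - 1) * (z ^ 2) ^ (lm - 1) := hle
      _ ≤ z ^ (2 * lm - 1) := h2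
      _ ≤ _ := le_add_of_nonneg_right h3
  · have hmono : ∀ y ∈ Icc (1:ℝ) z, (y ^ 2 - 1) ^ (lm - 1) ≤ (y - 1) ^ (lm - 1) := by
      intro y hy
      have h1 : (0:ℝ) ≤ y - 1 := by linarith [hy.1]
      have heq : (y ^ 2 - 1 : ℝ) = (y - 1) * (y + 1) := by ring
      rw [heq, Real.mul_rpow h1 (by linarith [hy.1])]
      have hle1 : (y + 1 : ℝ) ^ (lm - 1) ≤ 1 :=
        Real.rpow_le_one_of_one_le_of_nonpos (by linarith [hy.1]) (by linarith)
      nlinarith [Real.rpow_nonneg h1 (lm - 1), Real.rpow_nonneg (by linarith [hy.1] : (0:ℝ) ≤ y + 1) (lm - 1)]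
    have hint := sq_sub_one_rpow_II hl' hz
    have hbase : IntervalIntegrable (fun y : ℝ => (y - 1) ^ (lm - 1)) volume 1 z := by
      have := (intervalIntegral.intervalIntegrable_rpow' hl' (a := 0) (b := z - 1)).comp_sub_right 1
      simpa using this
    have hle := intervalIntegral.integral_mono_on hz hint hbase hmono
    have hval : (∫ y in (1:ℝ)..z, (y - 1) ^ (lm - 1)) = (z - 1) ^ lm / lm := by
      rw [show (∫ y in (1:ℝ)..z, (y - 1) ^ (lm - 1)) =
          ∫ y in (1:ℝ)..z, (fun x : ℝ => x ^ (lm - 1)) (y - 1) from rfl]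
      rw [intervalIntegral.integral_comp_sub_right (fun x : ℝ => x ^ (lm - 1)) 1]
      rw [integral_rpow (Or.inl hl')]
      rw [show (lm - 1 + 1 : ℝ) = lm by ring]
      norm_num [Real.zero_rpow (by linarith : lm ≠ 0)]
    rw [hval] at hle
    have h5 : (z - 1) ^ lm / lm ≤ z ^ lm / lm := by
      exact div_le_div_of_nonneg_right
        (Real.rpow_le_rpow (by linarith) (by linarith) hlm.le) hlm.le
    calc Ups (lm - 1) z ≤ (z - 1) ^ lm / lm := hle
      _ ≤ z ^ lm / lm := h5
      _ ≤ _ := le_add_of_nonneg_left h4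

end AuxLemmas2
section CoreLemma

lemma core {lm C w1 w2 ξ : ℝ} (hlm : 0 < lm) (hC : 0 < C)
    (hξ1 : w1 < ξ) (hξ2 : ξ < w2)
    (S : ℝ → ℝ) (hScont : Continuous S) (hS0 : ∀ v, 0 ≤ S v)
    {a b : ℝ} (hab : a < b) (ha : w1 ≤ a) (hb : b ≤ w2) (hξab : ξ ≤ a ∨ b ≤ ξ)
    (hSpos : ∀ v ∈ Ioo a b, 0 < S v) :
    0 < ∫ v : ℝ,
      (if w1 < v ∧ v < w2 then
        C * |ξ - v| ^ (2 * lm - 1) *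
          Ups (lm - 1) (((ξ + v) * (w1 + w2) - 2 * (w1 * w2 + ξ * v)) / ((w2 - w1) * |ξ - v|))
      else 0) * S v := by
  have hw12 : w1 < w2 := hξ1.trans hξ2
  have hL : 0 < w2 - w1 := sub_pos.mpr hw12
  have hl' : (-1:ℝ) < lm - 1 := by linarith
  set m := min (ξ - w1) (w2 - ξ) with hmdef
  have hm0 : 0 < m := lt_min (by linarith) (by linarith)
  obtain ⟨x0, hx0mem, hx0'⟩ := isCompact_Icc.exists_isMaxOn
    (⟨w1, left_mem_Icc.mpr hw12.le⟩ : (Icc w1 w2).Nonempty) hScont.continuousOn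
  have hx0 : ∀ y ∈ Icc w1 w2, S y ≤ S x0 := fun y hy => hx0' hy
  set M := S x0 with hMdef
  have hM0 : 0 ≤ M := hS0 x0
  set K1 := max (m ^ (2*lm-1)) ((w2-w1) ^ (2*lm-1)) with hK1def
  have hK10 : 0 ≤ K1 := le_trans (Real.rpow_nonneg hm0.le _) (le_max_left _ _)
  set K2 := (w2-w1) ^ lm / lm with hK2def
  have hK20 : 0 ≤ K2 := div_nonneg (Real.rpow_nonneg hL.le _) hlm.le
  set F : ℝ → ℝ := fun v =>
      (if w1 < v ∧ v < w2 then
        C * |ξ - v| ^ (2 * lm - 1) *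
          Ups (lm - 1) (((ξ + v) * (w1 + w2) - 2 * (w1 * w2 + ξ * v)) / ((w2 - w1) * |ξ - v|))
      else 0) * S v with hFdef
  have hN : ∀ v, w1 < v → v < w2 →
      0 < (ξ + v) * (w1 + w2) - 2 * (w1 * w2 + ξ * v) ∧
      m * (w2 - w1) ≤ (ξ + v) * (w1 + w2) - 2 * (w1 * w2 + ξ * v) ∧
      (ξ + v) * (w1 + w2) - 2 * (w1 * w2 + ξ * v) ≤ (w2 - w1) * (w2 - w1) := by
    intro v hv1 hv2
    have hm1 : m ≤ ξ - w1 := min_le_left _ _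
    have hm2 : m ≤ w2 - ξ := min_le_right _ _
    refine ⟨?_, ?_, ?_⟩
    · nlinarith [mul_pos (show (0:ℝ) < ξ - w1 by linarith) (show (0:ℝ) < w2 - v by linarith),
        mul_pos (show (0:ℝ) < w2 - ξ by linarith) (show (0:ℝ) < v - w1 by linarith)]
    · nlinarith [mul_nonneg (show (0:ℝ) ≤ ξ - w1 - m by linarith) (show (0:ℝ) ≤ w2 - v by linarith),
        mul_nonneg (show (0:ℝ) ≤ w2 - ξ - m by linarith) (show (0:ℝ) ≤ v - w1 by linarith)]
    · nlinarith [mul_nonneg (show (0:ℝ) ≤ w2 - ξ by linarith) (show (0:ℝ) ≤ w2 - v by linarith),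
        mul_nonneg (show (0:ℝ) ≤ ξ - w1 by linarith) (show (0:ℝ) ≤ v - w1 by linarith)]
  have hA1 : ∀ v, w1 < v → v < w2 → v ≠ ξ →
      1 < ((ξ + v) * (w1 + w2) - 2 * (w1 * w2 + ξ * v)) / ((w2 - w1) * |ξ - v|) := by
    intro v hv1 hv2 hvξ
    have hd : 0 < |ξ - v| := abs_pos.mpr (sub_ne_zero.mpr (Ne.symm hvξ))
    rw [lt_div_iff₀ (mul_pos hL hd)]
    rcases abs_cases (ξ - v) with ⟨he, _⟩ | ⟨he, _⟩ <;> rw [he] <;>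
      nlinarith [mul_pos (show (0:ℝ) < w2 - ξ by linarith) (show (0:ℝ) < v - w1 by linarith),
        mul_pos (show (0:ℝ) < ξ - w1 by linarith) (show (0:ℝ) < w2 - v by linarith)]
  have hker : ∀ v, w1 < v → v < w2 → v ≠ ξ →
      C * |ξ - v| ^ (2 * lm - 1) *
          Ups (lm - 1) (((ξ + v) * (w1 + w2) - 2 * (w1 * w2 + ξ * v)) / ((w2 - w1) * |ξ - v|))
        ≤ C * K1 + C * K2 * |ξ - v| ^ (lm - 1) := by
    intro v hv1 hv2 hvξ
    have hd : 0 < |ξ - v| := abs_pos.mpr (sub_ne_zero.mpr (Ne.symm hvξ))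
    obtain ⟨hN0, hNm, hNL⟩ := hN v hv1 hv2
    set N := (ξ + v) * (w1 + w2) - 2 * (w1 * w2 + ξ * v) with hNdef
    set A := N / ((w2 - w1) * |ξ - v|) with hAdef
    have hA : 1 < A := hA1 v hv1 hv2 hvξ
    have hA0 : 0 ≤ A := le_of_lt (lt_trans zero_lt_one hA)
    have hq1 : m ≤ N / (w2 - w1) := (le_div_iff₀ hL).mpr hNm
    have hq2 : N / (w2 - w1) ≤ w2 - w1 := (div_le_iff₀ hL).mpr hNL
    have hqpos : 0 < N / (w2 - w1) := div_pos hN0 hL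
    have hUb := Ups_bound hlm hA.le
    have hAabs : |ξ - v| * A = N / (w2 - w1) := by
      rw [hAdef]; field_simp
    have h1 : |ξ - v| ^ (2*lm-1) * A ^ (2*lm-1) ≤ K1 := by
      rw [← Real.mul_rpow (abs_nonneg _) hA0, hAabs]
      rcases le_or_gt 0 (2*lm-1) with h | h
      · exact le_trans (Real.rpow_le_rpow hqpos.le hq2 h) (le_max_right _ _)
      · exact le_trans (Real.rpow_le_rpow_of_nonpos hm0 hq1 h.le) (le_max_left _ _)
    have h2 : |ξ - v| ^ (2*lm-1) * (A ^ lm / lm) ≤ K2 * |ξ - v| ^ (lm-1) := by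
      have hAeq : A = (N / (w2 - w1)) / |ξ - v| := by rw [hAdef, div_div]
      have e1 : |ξ - v| ^ (2*lm-1) / |ξ - v| ^ lm = |ξ - v| ^ (lm - 1) := by
        rw [← Real.rpow_sub hd]; ring_nf
      rw [hAeq, Real.div_rpow hqpos.le (abs_nonneg _)]
      calc |ξ - v| ^ (2*lm-1) * ((N / (w2-w1)) ^ lm / |ξ - v| ^ lm / lm)
          = ((N / (w2-w1)) ^ lm / lm) * (|ξ - v| ^ (2*lm-1) / |ξ - v| ^ lm) := by ring
        _ = ((N / (w2-w1)) ^ lm / lm) * |ξ - v| ^ (lm-1) := by rw [e1]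
        _ ≤ K2 * |ξ - v| ^ (lm-1) := by
            apply mul_le_mul_of_nonneg_right _ (Real.rpow_nonneg (abs_nonneg _) _)
            exact div_le_div_of_nonneg_right
              (Real.rpow_le_rpow hqpos.le hq2 hlm.le) hlm.le
    calc C * |ξ - v| ^ (2*lm-1) * Ups (lm-1) A
        ≤ C * |ξ - v| ^ (2*lm-1) * (A ^ (2*lm-1) + A ^ lm / lm) := by
          apply mul_le_mul_of_nonneg_left hUb
            (mul_nonneg hC.le (Real.rpow_nonneg (abs_nonneg _) _))
      _ = C * (|ξ - v| ^ (2*lm-1) * A ^ (2*lm-1)) + C * (|ξ - v| ^ (2*lm-1) * (A ^ lm / lm)) := by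
          ring
      _ ≤ C * K1 + C * (K2 * |ξ - v| ^ (lm-1)) :=
          add_le_add (mul_le_mul_of_nonneg_left h1 hC.le) (mul_le_mul_of_nonneg_left h2 hC.le)
      _ = C * K1 + C * K2 * |ξ - v| ^ (lm-1) := by ring
  have hae : ∀ᵐ v : ℝ, v ≠ ξ := by
    have : {v : ℝ | ¬ v ≠ ξ} = {ξ} := by ext v; simp
    rw [MeasureTheory.ae_iff, this]
    exact measure_singleton ξ
  -- measurability
  have hUpsMcont : Continuous fun z : ℝ => Ups (lm - 1) (max 1 z) :=
    (Ups_contOn hl').comp_continuous (continuous_const.max continuous_id)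
      (fun z => le_max_left 1 z)
  have hAmeas : Measurable fun v : ℝ =>
      ((ξ + v) * (w1 + w2) - 2 * (w1 * w2 + ξ * v)) / ((w2 - w1) * |ξ - v|) := by
    apply Measurable.div
    · fun_prop
    · fun_prop
  have hGmeas : Measurable (fun v : ℝ =>
      (if w1 < v ∧ v < w2 then
        C * |ξ - v| ^ (2 * lm - 1) *
          Ups (lm - 1) (max 1 (((ξ + v) * (w1 + w2) - 2 * (w1 * w2 + ξ * v)) / ((w2 - w1) * |ξ - v|)))
      else 0) * S v) := by
    apply Measurable.mul _ hScont.measurable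
    have hs : MeasurableSet {v : ℝ | w1 < v ∧ v < w2} := by
      have : {v : ℝ | w1 < v ∧ v < w2} = Ioo w1 w2 := rfl
      rw [this]; exact measurableSet_Ioo
    apply Measurable.ite hs _ measurable_const
    apply Measurable.mul
    · exact measurable_const.mul ((measurable_rpow_const _).comp (by fun_prop))
    · exact hUpsMcont.measurable.comp hAmeas
  have hFG : F =ᵐ[volume] (fun v : ℝ =>
      (if w1 < v ∧ v < w2 then
        C * |ξ - v| ^ (2 * lm - 1) *
          Ups (lm - 1) (max 1 (((ξ + v) * (w1 + w2) - 2 * (w1 * w2 + ξ * v)) / ((w2 - w1) * |ξ - v|)))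
      else 0) * S v) := by
    filter_upwards [hae] with v hv
    by_cases hcond : w1 < v ∧ v < w2
    · simp only [hFdef, if_pos hcond, max_eq_right (hA1 v hcond.1 hcond.2 hv).le]
    · simp only [hFdef, if_neg hcond]
  -- integrability
  have hh_int : Integrable
      ((Icc w1 w2).indicator (fun v => M * (C*K1) + M * (C*K2) * |ξ - v| ^ (lm-1))) := by
    apply MeasureTheory.IntegrableOn.integrable_indicator _ measurableSet_Icc
    have hII : IntervalIntegrable
        (fun v : ℝ => M*(C*K1) + M * (C*K2) * |ξ - v| ^ (lm-1)) volume w1 w2 :=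
      intervalIntegrable_const.add ((abs_sub_rpow_II hl' ξ w1 w2).const_mul _)
    exact (intervalIntegrable_iff_integrableOn_Icc_of_le hw12.le).mp hII
  have hhnonneg : ∀ v : ℝ, 0 ≤
      (Icc w1 w2).indicator (fun v => M * (C*K1) + M * (C*K2) * |ξ - v| ^ (lm-1)) v := by
    intro v
    apply Set.indicator_nonneg
    intro x _
    exact add_nonneg (mul_nonneg hM0 (mul_nonneg hC.le hK10))
      (mul_nonneg (mul_nonneg hM0 (mul_nonneg hC.le hK20))
        (Real.rpow_nonneg (abs_nonneg _) _))
  have hbound : ∀ᵐ v : ℝ, ‖F v‖ ≤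
      (Icc w1 w2).indicator (fun v => M * (C*K1) + M * (C*K2) * |ξ - v| ^ (lm-1)) v := by
    filter_upwards [hae] with v hv
    by_cases hcond : w1 < v ∧ v < w2
    · have hkle := hker v hcond.1 hcond.2 hv
      have hknn : 0 ≤ C * |ξ - v| ^ (2 * lm - 1) *
          Ups (lm - 1) (((ξ + v) * (w1 + w2) - 2 * (w1 * w2 + ξ * v)) / ((w2 - w1) * |ξ - v|)) :=
        mul_nonneg (mul_nonneg hC.le (Real.rpow_nonneg (abs_nonneg _) _))
          (Ups_nonneg (hA1 v hcond.1 hcond.2 hv).le)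
      have hvmem : v ∈ Icc w1 w2 := ⟨hcond.1.le, hcond.2.le⟩
      rw [Set.indicator_of_mem hvmem]
      have hFv : F v = (C * |ξ - v| ^ (2 * lm - 1) *
          Ups (lm - 1) (((ξ + v) * (w1 + w2) - 2 * (w1 * w2 + ξ * v)) / ((w2 - w1) * |ξ - v|)))
          * S v := by
        simp only [hFdef, if_pos hcond]
      rw [hFv, Real.norm_eq_abs, abs_of_nonneg (mul_nonneg hknn (hS0 v))]
      calc _ ≤ (C * K1 + C * K2 * |ξ - v| ^ (lm-1)) * M :=
            mul_le_mul hkle (hx0 v hvmem) (hS0 v) (le_trans hknn hkle)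
        _ = M * (C*K1) + M * (C*K2) * |ξ - v| ^ (lm-1) := by ring
    · have hFv : F v = 0 := by simp only [hFdef, if_neg hcond, zero_mul]
      rw [hFv, norm_zero]
      exact hhnonneg v
  have hFint : Integrable F :=
    hh_int.mono' (hGmeas.aestronglyMeasurable.congr hFG.symm) hbound
  have hFnonneg : 0 ≤ᵐ[volume] F := by
    filter_upwards [hae] with v hv
    by_cases hcond : w1 < v ∧ v < w2
    · have : F v = (C * |ξ - v| ^ (2 * lm - 1) *
          Ups (lm - 1) (((ξ + v) * (w1 + w2) - 2 * (w1 * w2 + ξ * v)) / ((w2 - w1) * |ξ - v|)))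
          * S v := by simp only [hFdef, if_pos hcond]
      rw [this]
      exact mul_nonneg (mul_nonneg (mul_nonneg hC.le (Real.rpow_nonneg (abs_nonneg _) _))
        (Ups_nonneg (hA1 v hcond.1 hcond.2 hv).le)) (hS0 v)
    · have : F v = 0 := by simp only [hFdef, if_neg hcond, zero_mul]
      simp [this]
  show 0 < ∫ v, F v
  rw [MeasureTheory.integral_pos_iff_support_of_nonneg_ae hFnonneg hFint]
  have hsub : Ioo a b ⊆ Function.support F := by
    intro v hv
    have hv1 : w1 < v := lt_of_le_of_lt ha hv.1
    have hv2 : v < w2 := lt_of_lt_of_le hv.2 hb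
    have hvξ : v ≠ ξ := by
      rcases hξab with h | h
      · exact (lt_of_le_of_lt h hv.1).ne'
      · exact (hv.2.trans_le h).ne
    have hd : 0 < |ξ - v| := abs_pos.mpr (sub_ne_zero.mpr (Ne.symm hvξ))
    apply ne_of_gt
    have hcond : w1 < v ∧ v < w2 := ⟨hv1, hv2⟩
    have hFv : F v = (C * |ξ - v| ^ (2 * lm - 1) *
        Ups (lm - 1) (((ξ + v) * (w1 + w2) - 2 * (w1 * w2 + ξ * v)) / ((w2 - w1) * |ξ - v|)))
        * S v := by simp only [hFdef, if_pos hcond]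
    rw [hFv]
    exact mul_pos (mul_pos (mul_pos hC (Real.rpow_pos_of_pos hd _))
      (Ups_pos hl' (hA1 v hv1 hv2 hvξ))) (hSpos v hv)
  calc (0:ENNReal) < volume (Ioo a b) := by
        rw [Real.volume_Ioo]; exact ENNReal.ofReal_pos.mpr (by linarith)
    _ ≤ volume (Function.support F) := measure_mono hsub

end CoreLemma
section Glue

lemma om_spread {γ κ : ℝ} (hκ : 0 < κ) (hγ : 1 < γ) (hγ' : γ < 3) (f : ℝ × ℝ)
    (hf1 : 0 < f.1) (ξ : ℝ) :
    om1 γ κ f ξ < ξ ∧ ξ < om2 γ κ f ξ := by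
  have hth := th_pos hγ
  have hth1 := th_lt_one hγ'
  have hag := ag_pos hκ hγ
  have hcgk := cgk_pos hκ hγ hγ'
  have hγ1 : (0:ℝ) < γ - 1 := by linarith
  set X := ((f.2 / f.1 - ξ) / (1 - th γ)) ^ 2 + (f.1 / cgk γ κ) ^ (1 / lam γ) with hXdef
  have hE : 0 < (f.1 / cgk γ κ) ^ (1 / lam γ) :=
    Real.rpow_pos_of_pos (div_pos hf1 hcgk) _
  have hXpos : 0 < X := add_pos_of_nonneg_of_pos (sq_nonneg _) hE
  have hrf : rf γ κ f ξ = ag γ κ ^ (-(2 / (γ - 1))) * X ^ (1 / (γ - 1)) := rfl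
  have hrfpos : 0 < rf γ κ f ξ := by
    rw [hrf]
    exact mul_pos (Real.rpow_pos_of_pos hag _) (Real.rpow_pos_of_pos hXpos _)
  have key : (ag γ κ * rf γ κ f ξ ^ th γ) ^ 2 = X := by
    rw [mul_pow, ← Real.rpow_natCast (rf γ κ f ξ ^ th γ) 2,
      ← Real.rpow_mul hrfpos.le]
    norm_num
    rw [show th γ * 2 = γ - 1 by unfold th; ring]
    rw [hrf, Real.mul_rpow (Real.rpow_nonneg hag.le _) (Real.rpow_nonneg hXpos.le _),
      ← Real.rpow_mul hag.le, ← Real.rpow_mul hXpos.le]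
    rw [show -(2 / (γ - 1)) * (γ - 1) = -2 by field_simp,
      show 1 / (γ - 1) * (γ - 1) = 1 by field_simp, Real.rpow_one]
    rw [← Real.rpow_natCast (ag γ κ) 2, ← mul_assoc, ← Real.rpow_add hag]
    norm_num
  have huξ : uf γ f ξ - ξ = (f.2 / f.1 - ξ) / (1 - th γ) := by
    unfold uf
    have hf1' : f.1 ≠ 0 := ne_of_gt hf1
    have hth' : (1 : ℝ) - th γ ≠ 0 := by linarith
    field_simp
    ring
  have hlt : (uf γ f ξ - ξ) ^ 2 < (ag γ κ * rf γ κ f ξ ^ th γ) ^ 2 := by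
    rw [key, huξ, hXdef]
    linarith
  have hr : 0 < ag γ κ * rf γ κ f ξ ^ th γ :=
    mul_pos hag (Real.rpow_pos_of_pos hrfpos _)
  constructor
  · unfold om1
    nlinarith
  · unfold om2
    nlinarith

lemma Phi_eq {γ κ ρ u ξ : ℝ} (hξ1 : u - ag γ κ * ρ ^ th γ < ξ)
    (hξ2 : ξ < u + ag γ κ * ρ ^ th γ) (v : ℝ) :
    Phi γ κ ρ u ξ v =
      if u - ag γ κ * ρ ^ th γ < v ∧ v < u + ag γ κ * ρ ^ th γ then
        (1 - th γ) ^ 2 / th γ * (cgk γ κ / Jl (lam γ)) * |ξ - v| ^ (2 * lam γ - 1) *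
          Ups (lam γ - 1)
            (((ξ + v) * ((u - ag γ κ * ρ ^ th γ) + (u + ag γ κ * ρ ^ th γ)) -
              2 * ((u - ag γ κ * ρ ^ th γ) * (u + ag γ κ * ρ ^ th γ) + ξ * v)) /
              (((u + ag γ κ * ρ ^ th γ) - (u - ag γ κ * ρ ^ th γ)) * |ξ - v|))
      else 0 := by
  by_cases hv : u - ag γ κ * ρ ^ th γ < v ∧ v < u + ag γ κ * ρ ^ th γ
  · rw [if_pos hv]
    unfold Phi
    rw [if_pos ⟨hξ1, hξ2, hv.1, hv.2⟩]
  · rw [if_neg hv]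
    unfold Phi
    rw [if_neg (by tauto)]

end Glue
theorem stmt9 (γ κ : ℝ) (hκ : 0 < κ) (hγ : 1 < γ) (hγ' : γ < 3)
    (ξ ωmin ωmax : ℝ) (hω : ωmin < ωmax) (f : ℝ × ℝ) (hf : f ∈ Dset) :
    f ∈ Dtil γ κ ωmin ωmax ξ ↔
      HS γ κ (fun v => (max (v - ωmax) 0) ^ 2 + (max (ωmin - v) 0) ^ 2) f ξ ≤ 0 := by
  set S : ℝ → ℝ := fun v => (max (v - ωmax) 0) ^ 2 + (max (ωmin - v) 0) ^ 2 with hSdef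
  have hth := th_pos hγ
  have hth1 := th_lt_one hγ'
  have hlm := lam_pos hγ hγ'
  have hJl := Jl_pos_s9 hγ hγ'
  have hag := ag_pos hκ hγ
  have hcgk := cgk_pos hκ hγ hγ'
  have hS0 : ∀ v, 0 ≤ S v := fun v => add_nonneg (sq_nonneg _) (sq_nonneg _)
  have hScont : Continuous S := by
    apply Continuous.add
    · exact (Continuous.max (by continuity) continuous_const).pow 2
    · exact (Continuous.max (by continuity) continuous_const).pow 2
  have hC : 0 < (1 - th γ) ^ 2 / th γ * (cgk γ κ / Jl (lam γ)) :=
    mul_pos (div_pos (pow_pos (by linarith) 2) hth) (div_pos hcgk hJl)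
  constructor
  · rintro ⟨-, hcase⟩
    rcases hcase with rfl | ⟨h1, h2, h3⟩
    · simp [HS]
    · by_cases hf0 : f = 0
      · simp [HS, hf0]
      · have hf1 : 0 < f.1 := by
          rcases hf with h | h
          · exact h
          · exact absurd h hf0
        obtain ⟨hx1, hx2⟩ := om_spread hκ hγ hγ' f hf1 ξ
        have hx1' : uf γ f ξ - ag γ κ * rf γ κ f ξ ^ th γ < ξ := hx1
        have hx2' : ξ < uf γ f ξ + ag γ κ * rf γ κ f ξ ^ th γ := hx2
        unfold om1 at h1
        unfold om1 om2 at h2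
        unfold om2 at h3
        unfold HS
        rw [if_neg hf0]
        have hzero : ∀ v : ℝ, Phi γ κ (rf γ κ f ξ) (uf γ f ξ) ξ v * S v = 0 := by
          intro v
          rw [Phi_eq hx1' hx2' v]
          by_cases hcond : uf γ f ξ - ag γ κ * rf γ κ f ξ ^ th γ < v ∧
              v < uf γ f ξ + ag γ κ * rf γ κ f ξ ^ th γ
          · rw [if_pos hcond]
            have hSv : S v = 0 := by
              simp only [hSdef]
              rw [max_eq_right (by linarith [hcond.2] : v - ωmax ≤ 0),
                max_eq_right (by linarith [hcond.1] : ωmin - v ≤ 0)]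
              norm_num
            rw [hSv, mul_zero]
          · rw [if_neg hcond, zero_mul]
        have heq : (fun v : ℝ => Phi γ κ (rf γ κ f ξ) (uf γ f ξ) ξ v * S v) = fun _ => (0:ℝ) :=
          funext hzero
        rw [heq, integral_zero]
  · intro hHS
    refine ⟨hf, ?_⟩
    by_cases hf0 : f = 0
    · exact Or.inl hf0
    right
    have hf1 : 0 < f.1 := by
      rcases hf with h | h
      · exact h
      · exact absurd h hf0
    obtain ⟨hx1, hx2⟩ := om_spread hκ hγ hγ' f hf1 ξ
    have hx1' : uf γ f ξ - ag γ κ * rf γ κ f ξ ^ th γ < ξ := hx1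
    have hx2' : ξ < uf γ f ξ + ag γ κ * rf γ κ f ξ ^ th γ := hx2
    have h12 : om1 γ κ f ξ ≤ om2 γ κ f ξ := le_of_lt (hx1.trans hx2)
    by_contra hcon
    have hbad : om1 γ κ f ξ < ωmin ∨ ωmax < om2 γ κ f ξ := by
      by_contra hno
      push_neg at hno
      exact hcon ⟨hno.1, h12, hno.2⟩
    have hpos : 0 < ∫ v : ℝ, Phi γ κ (rf γ κ f ξ) (uf γ f ξ) ξ v * S v := by
      have hrw : (fun v : ℝ => Phi γ κ (rf γ κ f ξ) (uf γ f ξ) ξ v * S v) =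
          fun v : ℝ =>
          (if uf γ f ξ - ag γ κ * rf γ κ f ξ ^ th γ < v ∧
              v < uf γ f ξ + ag γ κ * rf γ κ f ξ ^ th γ then
            (1 - th γ) ^ 2 / th γ * (cgk γ κ / Jl (lam γ)) * |ξ - v| ^ (2 * lam γ - 1) *
              Ups (lam γ - 1)
                (((ξ + v) * ((uf γ f ξ - ag γ κ * rf γ κ f ξ ^ th γ) +
                    (uf γ f ξ + ag γ κ * rf γ κ f ξ ^ th γ)) -
                  2 * ((uf γ f ξ - ag γ κ * rf γ κ f ξ ^ th γ) *
                    (uf γ f ξ + ag γ κ * rf γ κ f ξ ^ th γ) + ξ * v)) /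
                  (((uf γ f ξ + ag γ κ * rf γ κ f ξ ^ th γ) -
                    (uf γ f ξ - ag γ κ * rf γ κ f ξ ^ th γ)) * |ξ - v|))
          else 0) * S v := funext fun v => by rw [Phi_eq hx1' hx2' v]
      rw [hrw]
      rcases hbad with hb1 | hb2
      · unfold om1 at hb1
        refine core hlm hC hx1' hx2' S hScont hS0
          (a := uf γ f ξ - ag γ κ * rf γ κ f ξ ^ th γ)
          (b := min ξ (min (uf γ f ξ + ag γ κ * rf γ κ f ξ ^ th γ) ωmin))
          ?_ le_rfl ?_ (Or.inr (min_le_left _ _)) ?_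
        · exact lt_min hx1' (lt_min (hx1'.trans hx2') hb1)
        · exact le_trans (min_le_right _ _) (min_le_left _ _)
        · intro v hv
          have hvmin : v < ωmin :=
            lt_of_lt_of_le hv.2 (le_trans (min_le_right _ _) (min_le_right _ _))
          apply add_pos_of_nonneg_of_pos (sq_nonneg _)
          apply pow_pos _ 2
          exact lt_max_of_lt_left (by linarith)
      · unfold om2 at hb2
        refine core hlm hC hx1' hx2' S hScont hS0
          (a := max ξ (max (uf γ f ξ - ag γ κ * rf γ κ f ξ ^ th γ) ωmax))
          (b := uf γ f ξ + ag γ κ * rf γ κ f ξ ^ th γ)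
          ?_ ?_ le_rfl (Or.inl (le_max_left _ _)) ?_
        · exact max_lt hx2' (max_lt (hx1'.trans hx2') hb2)
        · exact le_trans (le_max_left _ _) (le_max_right _ _)
        · intro v hv
          have hvmax : ωmax < v :=
            lt_of_le_of_lt (le_trans (le_max_right _ _) (le_max_right _ _)) hv.1
          apply add_pos_of_pos_of_nonneg _ (sq_nonneg _)
          apply pow_pos _ 2
          exact lt_max_of_lt_left (by linarith)
    unfold HS at hHS
    rw [if_neg hf0] at hHS
    linarith
end
end
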